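/- Let I be a nonempty index set and for each i ∈ I let F_i be a free group and θ_i : ℤ/2 → Aut(F_i) a homomorphism, forming the semidirect product F_i ⋊_{θ_i} ℤ/2. Then the free product ∗_{i∈I}(F_i ⋊_{θ_i} ℤ/2) is isomorphic to F ⋊_θ ℤ/2 for some free group F and some homomorphism θ : ℤ/2 → Aut(F); that is, there exist a type X, a homomorphism θ : ℤ/2 → Aut(FreeGroup X), and a group isomorphism ∗_{i∈I}(F_i ⋊_{θ_i} ℤ/2) ≅ (FreeGroup X) ⋊_θ ℤ/2. -/

import Mathlib

namespace Stmt0Aux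

abbrev C2 := Multiplicative (ZMod 2)

def tt : C2 := Multiplicative.ofAdd 1

lemma c2_cases (z : C2) : z = 1 ∨ z = tt := by revert z; decide

lemma tt_ne_one : tt ≠ (1 : C2) := by decide

lemma tt_mul_tt : tt * tt = 1 := by decide

/-- hom from C2 given an element of square one -/
def homOfSq {G : Type*} [Monoid G] (h : G) (hh : h * h = 1) : C2 →* G where
  toFun z := if z = 1 then 1 else h
  map_one' := if_pos rfl
  map_mul' a b := by
    rcases c2_cases a with ha | ha <;> rcases c2_cases b with hb | hb <;>
      subst ha <;> subst hb <;> simp [tt_ne_one, tt_mul_tt, hh]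

@[simp] lemma homOfSq_one {G : Type*} [Monoid G] (h : G) (hh : h * h = 1) :
    homOfSq h hh 1 = 1 := rfl

@[simp] lemma homOfSq_tt {G : Type*} [Monoid G] (h : G) (hh : h * h = 1) :
    homOfSq h hh tt = h := by simp [homOfSq, tt_ne_one]

lemma inv_eq_self {G : Type*} [Group G] {h : G} (hh : h * h = 1) : h⁻¹ = h :=
  inv_eq_of_mul_eq_one_right hh

section Main

variable {I : Type} [DecidableEq I] {X : I → Type}
  (θ : ∀ i, C2 →* MulAut (FreeGroup (X i))) (i₀ : I)

/-- the generating type of the big free group -/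
abbrev Ygen (X : I → Type) (i₀ : I) : Type := (Σ i, X i) ⊕ {i : I // i ≠ i₀}

/-- embedding of each free factor -/
def emb (i : I) : FreeGroup (X i) →* FreeGroup (Ygen X i₀) :=
  FreeGroup.lift fun x => FreeGroup.of (Sum.inl ⟨i, x⟩)

/-- the extra generators -/
def cg (j : {i : I // i ≠ i₀}) : FreeGroup (Ygen X i₀) := FreeGroup.of (Sum.inr j)

/-- the involution on the big free group, as an endomorphism -/
def sEnd : FreeGroup (Ygen X i₀) →* FreeGroup (Ygen X i₀) :=
  FreeGroup.lift fun y =>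
    match y with
    | Sum.inl ⟨i, x⟩ =>
        if h : i = i₀ then emb i₀ i (θ i tt (FreeGroup.of x))
        else cg i₀ ⟨i, h⟩ * emb i₀ i (θ i tt (FreeGroup.of x)) * (cg i₀ ⟨i, h⟩)⁻¹
    | Sum.inr j => (cg i₀ j)⁻¹

@[simp] lemma sEnd_cg (j : {i : I // i ≠ i₀}) : sEnd θ i₀ (cg i₀ j) = (cg i₀ j)⁻¹ := by
  simp [sEnd, cg]

lemma sEnd_of_inl (i : I) (x : X i) :
    sEnd θ i₀ (FreeGroup.of (Sum.inl ⟨i, x⟩)) =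
      if h : i = i₀ then emb i₀ i (θ i tt (FreeGroup.of x))
      else cg i₀ ⟨i, h⟩ * emb i₀ i (θ i tt (FreeGroup.of x)) * (cg i₀ ⟨i, h⟩)⁻¹ := by
  simp [sEnd]

lemma sEnd_emb₀ (w : FreeGroup (X i₀)) :
    sEnd θ i₀ (emb i₀ i₀ w) = emb i₀ i₀ (θ i₀ tt w) := by
  have h : (sEnd θ i₀).comp (emb i₀ i₀) =
      (emb i₀ i₀).comp (θ i₀ tt).toMonoidHom := by
    apply FreeGroup.ext_hom
    intro x
    simp [emb, sEnd_of_inl]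
  exact DFunLike.congr_fun h w

lemma sEnd_emb (i : I) (h : i ≠ i₀) (w : FreeGroup (X i)) :
    sEnd θ i₀ (emb i₀ i w) = cg i₀ ⟨i, h⟩ * emb i₀ i (θ i tt w) * (cg i₀ ⟨i, h⟩)⁻¹ := by
  have h2 : (sEnd θ i₀).comp (emb i₀ i) =
      ((MulAut.conj (cg i₀ ⟨i, h⟩)).toMonoidHom.comp (emb i₀ i)).comp
        (θ i tt).toMonoidHom := by
    apply FreeGroup.ext_hom
    intro x
    simp [emb, sEnd_of_inl, h]
  simpa [MulAut.conj_apply] using DFunLike.congr_fun h2 w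

lemma theta_tt_tt (i : I) (w : FreeGroup (X i)) : θ i tt (θ i tt w) = w := by
  rw [← MulAut.mul_apply, ← map_mul, tt_mul_tt, map_one, MulAut.one_apply]

lemma sEnd_sEnd (w : FreeGroup (Ygen X i₀)) : sEnd θ i₀ (sEnd θ i₀ w) = w := by
  have h : (sEnd θ i₀).comp (sEnd θ i₀) = MonoidHom.id _ := by
    apply FreeGroup.ext_hom
    rintro (⟨i, x⟩ | j)
    · rw [MonoidHom.comp_apply, sEnd_of_inl, MonoidHom.id_apply]
      by_cases hi : i = i₀
      · subst hi
        rw [dif_pos rfl]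
        rw [sEnd_emb₀, theta_tt_tt]
        simp [emb]
      · simp only [dif_neg hi]
        rw [map_mul, map_mul, map_inv, sEnd_cg, sEnd_emb θ i₀ i hi, theta_tt_tt]
        simp [emb, mul_assoc]
    · rw [MonoidHom.comp_apply, MonoidHom.id_apply,
        show FreeGroup.of (Sum.inr j) = cg i₀ j from rfl, sEnd_cg, map_inv, sEnd_cg, inv_inv]
  exact DFunLike.congr_fun h w

/-- the involution as an automorphism -/
def σAut : MulAut (FreeGroup (Ygen X i₀)) :=
  { toFun := sEnd θ i₀
    invFun := sEnd θ i₀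
    left_inv := sEnd_sEnd θ i₀
    right_inv := sEnd_sEnd θ i₀
    map_mul' := map_mul _ }

lemma σAut_sq : σAut θ i₀ * σAut θ i₀ = 1 := by
  ext w
  exact sEnd_sEnd θ i₀ w

/-- the action of C2 on the big free group -/
def ϑhom : C2 →* MulAut (FreeGroup (Ygen X i₀)) := homOfSq (σAut θ i₀) (σAut_sq θ i₀)

@[simp] lemma ϑhom_tt_apply (w : FreeGroup (Ygen X i₀)) : ϑhom θ i₀ tt w = sEnd θ i₀ w := by
  rw [ϑhom, homOfSq_tt]; rfl

end Main


open SemidirectProduct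

/-- conjugation of an `inl` element by a general element, in a semidirect product -/
lemma conj_mk {N G : Type*} [Group N] [Group G] {φ : G →* MulAut N} (u n : N) (g : G) :
    (⟨u, g⟩ : N ⋊[φ] G) * ⟨n, 1⟩ * (⟨u, g⟩ : N ⋊[φ] G)⁻¹ = ⟨u * φ g n * u⁻¹, 1⟩ := by
  ext <;>
    simp [mul_left, mul_right, inv_left, inv_right, map_inv, mul_assoc]

lemma mk_inl {N G : Type*} [Group N] [Group G] {φ : G →* MulAut N} (n : N) :
    (⟨n, 1⟩ : N ⋊[φ] G) = inl n := rfl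

lemma mk_inr {N G : Type*} [Group N] [Group G] {φ : G →* MulAut N} (g : G) :
    (⟨1, g⟩ : N ⋊[φ] G) = inr g := rfl

section Main2

variable {I : Type} [DecidableEq I] {X : I → Type}
  (θ : ∀ i, C2 →* MulAut (FreeGroup (X i))) (i₀ : I)

/-- the target group -/
abbrev Hgrp := FreeGroup (Ygen X i₀) ⋊[ϑhom θ i₀] C2

/-- the source group -/
abbrev Ggrp := Monoid.CoprodI fun i => FreeGroup (X i) ⋊[θ i] C2

/-- image in `Hgrp` of the order two element of the `i`-th factor -/
def aH (i : I) : Hgrp θ i₀ :=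
  ⟨if h : i = i₀ then 1 else (cg i₀ ⟨i, h⟩)⁻¹, tt⟩

lemma aH_sq (i : I) : aH θ i₀ i * aH θ i₀ i = 1 := by
  by_cases h : i = i₀
  · subst h
    rw [aH, dif_pos rfl, mk_inr, ← map_mul, tt_mul_tt, map_one]
  · rw [aH, dif_neg h]
    rw [mul_def]
    ext
    · show (cg i₀ ⟨i, h⟩)⁻¹ * ϑhom θ i₀ tt (cg i₀ ⟨i, h⟩)⁻¹ = 1
      rw [ϑhom_tt_apply, map_inv, sEnd_cg, inv_inv, inv_mul_cancel]
    · exact tt_mul_tt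

lemma sEnd_emb_general (i : I) (w : FreeGroup (X i)) :
    (if h : i = i₀ then 1 else (cg i₀ ⟨i, h⟩)⁻¹) * sEnd θ i₀ (emb i₀ i w) *
      (if h : i = i₀ then 1 else (cg i₀ ⟨i, h⟩)⁻¹)⁻¹ = emb i₀ i (θ i tt w) := by
  by_cases h : i = i₀
  · subst h
    rw [dif_pos rfl, sEnd_emb₀, one_mul, inv_one, mul_one]
  · rw [dif_neg h, sEnd_emb θ i₀ i h, inv_inv]
    group

/-- the `N`-part of the hom out of the `i`-th factor -/
def ΦfN (i : I) : FreeGroup (X i) →* Hgrp θ i₀ :=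
  (inl : FreeGroup (Ygen X i₀) →* Hgrp θ i₀).comp (emb i₀ i)

lemma compatΦ (i : I) : ∀ g : C2, (ΦfN θ i₀ i).comp ((θ i) g).toMonoidHom =
    (MulAut.conj (homOfSq (aH θ i₀ i) (aH_sq θ i₀ i) g)).toMonoidHom.comp (ΦfN θ i₀ i) := by
  intro g
  rcases c2_cases g with hg | hg <;> subst hg
  · refine MonoidHom.ext fun w => ?_
    simp only [MonoidHom.comp_apply, MulEquiv.coe_toMonoidHom, map_one, MulAut.one_apply,
      homOfSq_one, MulAut.conj_apply, one_mul, inv_one, mul_one]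
  · refine MonoidHom.ext fun w => ?_
    simp only [MonoidHom.comp_apply, MulEquiv.coe_toMonoidHom, MulAut.conj_apply, homOfSq_tt,
      ΦfN]
    rw [show (inl (emb i₀ i w) : Hgrp θ i₀) = ⟨emb i₀ i w, 1⟩ from rfl, aH, conj_mk,
      ϑhom_tt_apply, sEnd_emb_general θ i₀ i w, mk_inl]

/-- the forward homomorphism -/
def Φhom : Ggrp θ →* Hgrp θ i₀ :=
  Monoid.CoprodI.lift fun i =>
    SemidirectProduct.lift (ΦfN θ i₀ i) (homOfSq (aH θ i₀ i) (aH_sq θ i₀ i)) (compatΦ θ i₀ i)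

/-- the order two element of the `i`-th factor inside the coproduct -/
def aG (i : I) : Ggrp θ :=
  Monoid.CoprodI.of (⟨1, tt⟩ : FreeGroup (X i) ⋊[θ i] C2)

lemma aG_sq (i : I) : aG θ i * aG θ i = 1 := by
  rw [aG, ← map_mul, mk_inr, ← map_mul, tt_mul_tt, map_one, map_one]

lemma aG_cancel (i : I) (z : Ggrp θ) : aG θ i * (aG θ i * z) = z := by
  rw [← mul_assoc, aG_sq, one_mul]

lemma aG_inv (i : I) : (aG θ i)⁻¹ = aG θ i := inv_eq_self (aG_sq θ i)

/-- the hom from the big free group back to the coproduct -/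
def Fhom : FreeGroup (Ygen X i₀) →* Ggrp θ :=
  FreeGroup.lift fun y =>
    match y with
    | Sum.inl ⟨i, x⟩ =>
        Monoid.CoprodI.of (M := fun i => FreeGroup (X i) ⋊[θ i] C2)
          (⟨FreeGroup.of x, 1⟩ : FreeGroup (X i) ⋊[θ i] C2)
    | Sum.inr j => aG θ i₀ * aG θ j.1

@[simp] lemma Fhom_of_inl (i : I) (x : X i) :
    Fhom θ i₀ (FreeGroup.of (Sum.inl ⟨i, x⟩)) =
      Monoid.CoprodI.of (M := fun i => FreeGroup (X i) ⋊[θ i] C2)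
        (⟨FreeGroup.of x, 1⟩ : FreeGroup (X i) ⋊[θ i] C2) := by
  simp [Fhom]

@[simp] lemma Fhom_cg (j : {i : I // i ≠ i₀}) :
    Fhom θ i₀ (cg i₀ j) = aG θ i₀ * aG θ j.1 := by
  simp [Fhom, cg]

lemma Fhom_emb (i : I) (w : FreeGroup (X i)) :
    Fhom θ i₀ (emb i₀ i w) =
      Monoid.CoprodI.of (M := fun i => FreeGroup (X i) ⋊[θ i] C2)
        (inl w : FreeGroup (X i) ⋊[θ i] C2) := by
  have h : (Fhom θ i₀).comp (emb i₀ i) =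
      (Monoid.CoprodI.of (M := fun i => FreeGroup (X i) ⋊[θ i] C2)).comp
        (inl : FreeGroup (X i) →* FreeGroup (X i) ⋊[θ i] C2) := by
    apply FreeGroup.ext_hom
    intro x
    simp [emb, mk_inl]
  exact DFunLike.congr_fun h w

/-- conjugation by the order two generator inside a factor -/
lemma factor_conj (i : I) (n : FreeGroup (X i)) :
    Monoid.CoprodI.of (M := fun i => FreeGroup (X i) ⋊[θ i] C2)
        (inl (θ i tt n) : FreeGroup (X i) ⋊[θ i] C2) =
      aG θ i * Monoid.CoprodI.of (M := fun i => FreeGroup (X i) ⋊[θ i] C2)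
        (inl n : FreeGroup (X i) ⋊[θ i] C2) * (aG θ i)⁻¹ := by
  rw [inl_aut, map_mul, map_mul, map_inv]
  rfl

lemma commΨ : ∀ g : C2, (Fhom θ i₀).comp ((ϑhom θ i₀) g).toMonoidHom =
    (MulAut.conj (homOfSq (aG θ i₀) (aG_sq θ i₀) g)).toMonoidHom.comp (Fhom θ i₀) := by
  intro g
  rcases c2_cases g with hg | hg <;> subst hg
  · refine MonoidHom.ext fun w => ?_
    simp only [MonoidHom.comp_apply, MulEquiv.coe_toMonoidHom, map_one, MulAut.one_apply,
      homOfSq_one, MulAut.conj_apply, one_mul, inv_one, mul_one]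
  · have key : (Fhom θ i₀).comp (sEnd θ i₀) =
        (MulAut.conj (aG θ i₀)).toMonoidHom.comp (Fhom θ i₀) := by
      apply FreeGroup.ext_hom
      rintro (⟨i, x⟩ | ⟨i, h⟩) <;>
        simp only [MonoidHom.comp_apply, MulEquiv.coe_toMonoidHom, MulAut.conj_apply]
      · rw [sEnd_of_inl]
        by_cases h : i = i₀
        · subst h
          rw [dif_pos rfl, Fhom_emb, factor_conj, Fhom_of_inl, mk_inl]
        · rw [dif_neg h, map_mul, map_mul, map_inv, Fhom_cg, Fhom_emb, factor_conj,
            Fhom_of_inl, mk_inl, aG_inv, mul_inv_rev, aG_inv, aG_inv]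
          simp only [mul_assoc, aG_cancel]
      · rw [show FreeGroup.of (Sum.inr ⟨i, h⟩) = cg i₀ ⟨i, h⟩ from rfl, sEnd_cg, map_inv,
          Fhom_cg, mul_inv_rev, aG_inv, aG_inv]
        simp only [mul_assoc, aG_cancel]
    refine MonoidHom.ext fun w => ?_
    simp only [MonoidHom.comp_apply, MulEquiv.coe_toMonoidHom, MulAut.conj_apply, homOfSq_tt]
    have := DFunLike.congr_fun key w
    simp only [MonoidHom.comp_apply, MulEquiv.coe_toMonoidHom, MulAut.conj_apply] at this
    rw [show ((ϑhom θ i₀) tt) w = sEnd θ i₀ w from ϑhom_tt_apply θ i₀ w, this]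

/-- the backward homomorphism -/
def Ψhom : Hgrp θ i₀ →* Ggrp θ :=
  SemidirectProduct.lift (Fhom θ i₀) (homOfSq (aG θ i₀) (aG_sq θ i₀)) (commΨ θ i₀)

end Main2

section Main3

variable {I : Type} [DecidableEq I] {X : I → Type}
  (θ : ∀ i, C2 →* MulAut (FreeGroup (X i))) (i₀ : I)

@[simp] lemma emb_of (i : I) (x : X i) :
    emb i₀ i (FreeGroup.of x) = FreeGroup.of (Sum.inl ⟨i, x⟩) := by
  simp [emb]

lemma inr_mul_inl {N G : Type*} [Group N] [Group G] {φ : G →* MulAut N} (g : G) (n : N) :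
    (inr g : N ⋊[φ] G) * inl n = inl (φ g n) * inr g := by
  rw [inl_aut, mul_assoc, ← map_mul, inv_mul_cancel, map_one, mul_one]

lemma Φ_of_inl (i : I) (n : FreeGroup (X i)) :
    Φhom θ i₀ (Monoid.CoprodI.of (M := fun i => FreeGroup (X i) ⋊[θ i] C2)
        (inl n : FreeGroup (X i) ⋊[θ i] C2)) =
      inl (emb i₀ i n) := by
  rw [Φhom, Monoid.CoprodI.lift_of, lift_inl]
  rfl

lemma Φ_of_inr_tt (i : I) :
    Φhom θ i₀ (Monoid.CoprodI.of (M := fun i => FreeGroup (X i) ⋊[θ i] C2)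
        (inr tt : FreeGroup (X i) ⋊[θ i] C2)) =
      aH θ i₀ i := by
  rw [Φhom, Monoid.CoprodI.lift_of, lift_inr, homOfSq_tt]

lemma Φ_aG (i : I) : Φhom θ i₀ (aG θ i) = aH θ i₀ i := by
  rw [aG, mk_inr, Φ_of_inr_tt]

lemma Ψ_inl (w : FreeGroup (Ygen X i₀)) : Ψhom θ i₀ (inl w) = Fhom θ i₀ w := by
  rw [Ψhom, lift_inl]

lemma Ψ_inr_tt : Ψhom θ i₀ (inr tt) = aG θ i₀ := by
  rw [Ψhom, lift_inr, homOfSq_tt]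

lemma ΨΦ : (Ψhom θ i₀).comp (Φhom θ i₀) = MonoidHom.id (Ggrp θ) := by
  apply Monoid.CoprodI.ext_hom
  intro i
  apply SemidirectProduct.hom_ext
  · refine FreeGroup.ext_hom _ _ fun x => ?_
    simp only [MonoidHom.comp_apply, MonoidHom.id_apply]
    rw [Φ_of_inl, emb_of, Ψ_inl, Fhom_of_inl, mk_inl]
  · refine MonoidHom.ext fun z => ?_
    rcases c2_cases z with hz | hz <;> subst hz
    · simp only [MonoidHom.comp_apply, map_one]
    · simp only [MonoidHom.comp_apply, MonoidHom.id_apply]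
      rw [Φ_of_inr_tt θ i₀ i, aH, mk_eq_inl_mul_inr, map_mul, Ψ_inl, Ψ_inr_tt]
      by_cases h : i = i₀
      · subst h
        rw [dif_pos rfl, map_one, one_mul, aG, mk_inr]
      · rw [dif_neg h, map_inv, Fhom_cg, mul_inv_rev, aG_inv, aG_inv, mul_assoc, aG_sq,
          mul_one, aG, mk_inr]

lemma ΦΨ : (Φhom θ i₀).comp (Ψhom θ i₀) = MonoidHom.id (Hgrp θ i₀) := by
  apply SemidirectProduct.hom_ext
  · refine FreeGroup.ext_hom _ _ fun y => ?_
    simp only [MonoidHom.comp_apply, MonoidHom.id_apply]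
    rw [Ψ_inl]
    match y with
    | Sum.inl ⟨i, x⟩ =>
        rw [Fhom_of_inl, mk_inl, Φ_of_inl, emb_of]
    | Sum.inr j =>
        rw [show FreeGroup.of (Sum.inr j) = cg i₀ j from rfl, Fhom_cg, map_mul, Φ_aG, Φ_aG,
          show aH θ i₀ i₀ = inr tt by rw [aH, dif_pos rfl, mk_inr],
          show aH θ i₀ j.1 = inl (cg i₀ ⟨j.1, j.2⟩)⁻¹ * inr tt by
            rw [aH, dif_neg j.2, mk_eq_inl_mul_inr],
          ← mul_assoc, inr_mul_inl, mul_assoc, ← map_mul, tt_mul_tt, map_one, mul_one]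
        have : (ϑhom θ i₀ tt) (cg i₀ ⟨j.1, j.2⟩)⁻¹ = cg i₀ j := by
          rw [ϑhom_tt_apply, map_inv, sEnd_cg, inv_inv]
        rw [this]
  · refine MonoidHom.ext fun z => ?_
    rcases c2_cases z with hz | hz <;> subst hz
    · simp only [MonoidHom.comp_apply, map_one]
    · simp only [MonoidHom.comp_apply, MonoidHom.id_apply]
      rw [Ψ_inr_tt, Φ_aG, aH, dif_pos rfl, mk_inr]

end Main3

end Stmt0Aux

/-- the free product of a nonempty family of groups `F_i ⋊ ℤ/2`, with each
`F_i` free, is isomorphic to `F ⋊ ℤ/2` for some free group `F`. -/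
theorem stmt_0 (I : Type) [Nonempty I] (X : I → Type)
    (θ : ∀ i, Multiplicative (ZMod 2) →* MulAut (FreeGroup (X i))) :
    ∃ (Y : Type) (ϑ : Multiplicative (ZMod 2) →* MulAut (FreeGroup Y)),
      Nonempty ((Monoid.CoprodI fun i => FreeGroup (X i) ⋊[θ i] Multiplicative (ZMod 2)) ≃*
        (FreeGroup Y ⋊[ϑ] Multiplicative (ZMod 2))) := by
  letI := Classical.decEq I
  obtain ⟨i₀⟩ := ‹Nonempty I›
  exact ⟨Stmt0Aux.Ygen X i₀, Stmt0Aux.ϑhom θ i₀,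
    ⟨MonoidHom.toMulEquiv (Stmt0Aux.Φhom θ i₀) (Stmt0Aux.Ψhom θ i₀)
      (Stmt0Aux.ΨΦ θ i₀) (Stmt0Aux.ΦΨ θ i₀)⟩⟩
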